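/- arXiv:2302.14324 — 2 statements merged into one kernel-verified Lean document; each statement's English description precedes it below -/
import Mathlib

section
/- Let p ∈ ℂ[X] be a polynomial of degree exactly n. Then p is QSP-achievable, i.e. there exists Φ = (φ_0, …, φ_n) ∈ ℝ^{n+1} such that for all x ∈ [−1, 1] the (0,0) entry of QSP(Φ, x) equals p(x), if and only if there exists a polynomial q ∈ ℂ[X] such that: (a) deg q ≤ n − 1; (b) either p is even and q is odd, or p is odd and q is even (a polynomial r is even if r(−x) = r(x) for all x and odd if r(−x) = −r(x) for all x); and (c) for every real x, ‖p(x)‖² + (1 − x²)·‖q(x)‖² = 1. -/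
open Matrix Complex Polynomial

/-- The reflection matrix `R(x)` appearing in quantum signal processing. -/
noncomputable def Rmat (x : ℝ) : Matrix (Fin 2) (Fin 2) ℂ :=
  !![(x : ℂ), (Real.sqrt (1 - x ^ 2) : ℂ); (Real.sqrt (1 - x ^ 2) : ℂ), -(x : ℂ)]

/-- The phase matrix `diag(e^{iφ}, e^{-iφ})`. -/
noncomputable def phaseMat (φ : ℝ) : Matrix (Fin 2) (Fin 2) ℂ :=
  !![Complex.exp (φ * Complex.I), 0; 0, Complex.exp (-(φ * Complex.I))]

/-- The quantum signal processing matrix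
`QSP(Φ, x) = e^{iφ₀σ_z} ∏_{j=1}^n R(x) e^{iφ_jσ_z}`, product from `j = 1` on the
left to `j = n` on the right. -/
noncomputable def QSP (n : ℕ) (Φ : ℕ → ℝ) (x : ℝ) : Matrix (Fin 2) (Fin 2) ℂ :=
  phaseMat (Φ 0) * ((List.range n).map (fun j => Rmat x * phaseMat (Φ (j + 1)))).prod

noncomputable def pconj (p : Polynomial ℂ) : Polynomial ℂ := p.map (starRingEnd ℂ)

lemma pconj_eval (p : Polynomial ℂ) (z : ℂ) :
    (pconj p).eval z = (starRingEnd ℂ) (p.eval ((starRingEnd ℂ) z)) := by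
  induction p using Polynomial.induction_on' with
  | add f g hf hg =>
    simp only [pconj] at hf hg ⊢
    simp [Polynomial.map_add, hf, hg]
  | monomial k a =>
    simp [pconj, map_monomial, eval_monomial, _root_.map_mul, _root_.map_pow]

lemma pconj_pconj (p : Polynomial ℂ) : pconj (pconj p) = p := by
  ext k; simp [pconj, coeff_map]

lemma pconj_coeff (p : Polynomial ℂ) (k : ℕ) :
    (pconj p).coeff k = (starRingEnd ℂ) (p.coeff k) := Polynomial.coeff_map _ _

lemma pconj_degree (p : Polynomial ℂ) : (pconj p).degree = p.degree :=
  Polynomial.degree_map_eq_of_injective (RingHom.injective _) p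

lemma pconj_mul (p q : Polynomial ℂ) : pconj (p * q) = pconj p * pconj q :=
  Polynomial.map_mul _
lemma pconj_add (p q : Polynomial ℂ) : pconj (p + q) = pconj p + pconj q :=
  Polynomial.map_add _
lemma pconj_sub (p q : Polynomial ℂ) : pconj (p - q) = pconj p - pconj q :=
  Polynomial.map_sub _
lemma pconj_C (a : ℂ) : pconj (C a) = C ((starRingEnd ℂ) a) := Polynomial.map_C _
lemma pconj_X : pconj X = X := Polynomial.map_X _
lemma pconj_pow (p : Polynomial ℂ) (k : ℕ) : pconj (p ^ k) = pconj p ^ k :=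
  Polynomial.map_pow _ _
lemma pconj_zero : pconj 0 = 0 := Polynomial.map_zero _

noncomputable def mat (n : ℕ) (P Q : Polynomial ℂ) (x : ℝ) : Matrix (Fin 2) (Fin 2) ℂ :=
  !![P.eval (x : ℂ), Complex.I * (Real.sqrt (1 - x ^ 2) : ℂ) * Q.eval (x : ℂ);
     (-1 : ℂ) ^ n * (Complex.I * (Real.sqrt (1 - x ^ 2) : ℂ) * (pconj Q).eval (x : ℂ)),
     (-1 : ℂ) ^ n * (pconj P).eval (x : ℂ)]

lemma QSP_succ (n : ℕ) (Φ : ℕ → ℝ) (x : ℝ) :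
    QSP (n + 1) Φ x = phaseMat (Φ 0) * (Rmat x * QSP n (fun k => Φ (k + 1)) x) := by
  unfold QSP
  rw [List.range_succ_eq_map]
  simp [List.map_map, Function.comp_def, Nat.succ_eq_add_one, mul_assoc]

lemma QSP_zero (Φ : ℕ → ℝ) (x : ℝ) : QSP 0 Φ x = phaseMat (Φ 0) := by
  simp [QSP]

lemma comp_neg_X_coeff (p : Polynomial ℂ) (k : ℕ) :
    (p.comp (-X)).coeff k = (-1 : ℂ) ^ k * p.coeff k := by
  induction p using Polynomial.induction_on' with
  | add f g hf hg => simp [add_comp, hf, hg]; ring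
  | monomial m a =>
    have h1 : ((monomial m) a).comp (-X) = C ((-1) ^ m * a) * X ^ m := by
      rw [monomial_comp, neg_pow]
      rw [show ((-1 : Polynomial ℂ)) ^ m = C ((-1 : ℂ) ^ m) by
        rw [map_pow]; simp]
      rw [← mul_assoc, ← C_mul, mul_comm a]
    rw [h1, coeff_C_mul, coeff_X_pow, coeff_monomial]
    by_cases hmk : m = k
    · subst hmk; simp
    · simp [hmk, Ne.symm hmk]

lemma coeff_eq_zero_of_parity (p : Polynomial ℂ) (σ : ℂ)
    (h : ∀ x : ℂ, p.eval (-x) = σ * p.eval x) (k : ℕ) (hk : ((-1 : ℂ)) ^ k ≠ σ) :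
    p.coeff k = 0 := by
  have hcomp : p.comp (-X) = C σ * p := by
    apply Polynomial.funext
    intro z
    simp [eval_comp, h z]
  have hc := comp_neg_X_coeff p k
  rw [hcomp, coeff_C_mul] at hc
  have h0 : ((-1 : ℂ) ^ k - σ) * p.coeff k = 0 := by linear_combination -hc
  rcases mul_eq_zero.1 h0 with h' | h'
  · exact absurd (by linear_combination h') hk
  · exact h'

lemma parity_pconj (p : Polynomial ℂ) (k : ℕ)
    (h : ∀ x : ℂ, p.eval (-x) = (-1 : ℂ) ^ k * p.eval x) :
    ∀ x : ℂ, (pconj p).eval (-x) = (-1 : ℂ) ^ k * (pconj p).eval x := by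
  intro x
  rw [pconj_eval, pconj_eval]
  rw [show (starRingEnd ℂ) (-x) = -(starRingEnd ℂ) x by simp, h]
  simp

lemma neg_one_pow_ne (m k : ℕ) (h : m % 2 ≠ k % 2) : ((-1 : ℂ)) ^ m ≠ (-1 : ℂ) ^ k := by
  rw [← Nat.div_add_mod m 2, ← Nat.div_add_mod k 2, pow_add, pow_add, pow_mul, pow_mul]
  simp only [neg_one_sq, one_pow, one_mul]
  rcases Nat.mod_two_eq_zero_or_one m with hm | hm <;>
    rcases Nat.mod_two_eq_zero_or_one k with hk | hk <;>
      simp_all <;> norm_num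

lemma alg_norm (e f c x p q pcv qcv p' q' pc' qc' : ℂ) (hef : e * f = 1) (hc : c ^ 2 = -1)
    (h1 : p = e * (x * p' + c * (1 - x ^ 2) * qc'))
    (h2 : q = e * (x * q' - c * pc'))
    (h3 : pcv = f * (x * pc' - c * (1 - x ^ 2) * q'))
    (h4 : qcv = f * (x * qc' + c * p'))
    (h : p' * pc' + (1 - x ^ 2) * (q' * qc') = 1) :
    p * pcv + (1 - x ^ 2) * (q * qcv) = 1 := by
  subst h1 h2 h3 h4
  linear_combination e * f * (x ^ 2 - c ^ 2 * (1 - x ^ 2)) * h +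
    (x ^ 2 - c ^ 2 * (1 - x ^ 2)) * hef - (1 - x ^ 2) * hc

lemma alg_norm_rev (e f c x p q pcv qcv p' q' pc' qc' : ℂ) (hef : e * f = 1) (hc : c ^ 2 = -1)
    (h1 : p = e * (x * p' + c * (1 - x ^ 2) * qc'))
    (h2 : q = e * (x * q' - c * pc'))
    (h3 : pcv = f * (x * pc' - c * (1 - x ^ 2) * q'))
    (h4 : qcv = f * (x * qc' + c * p'))
    (h : p * pcv + (1 - x ^ 2) * (q * qcv) = 1) :
    p' * pc' + (1 - x ^ 2) * (q' * qc') = 1 := by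
  subst h1 h2 h3 h4
  linear_combination h - (p' * pc' + (1 - x ^ 2) * (q' * qc')) * (x ^ 2 - c ^ 2 * (1 - x ^ 2)) * hef
    + (p' * pc' + (1 - x ^ 2) * (q' * qc')) * (1 - x ^ 2) * hc

lemma mat_step (n : ℕ) (φ0 : ℝ) (P Q P' Q' : Polynomial ℂ) (x : ℝ)
    (hx : x ∈ Set.Icc (-1 : ℝ) 1)
    (h1 : P.eval (x : ℂ) = Complex.exp (φ0 * Complex.I) *
      ((x : ℂ) * P'.eval (x : ℂ) + ((-1 : ℂ) ^ n * Complex.I) * (1 - (x : ℂ) ^ 2) * (pconj Q').eval (x : ℂ)))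
    (h2 : Q.eval (x : ℂ) = Complex.exp (φ0 * Complex.I) *
      ((x : ℂ) * Q'.eval (x : ℂ) - ((-1 : ℂ) ^ n * Complex.I) * (pconj P').eval (x : ℂ)))
    (h3 : (pconj P).eval (x : ℂ) = Complex.exp (-(φ0 * Complex.I)) *
      ((x : ℂ) * (pconj P').eval (x : ℂ) - ((-1 : ℂ) ^ n * Complex.I) * (1 - (x : ℂ) ^ 2) * Q'.eval (x : ℂ)))
    (h4 : (pconj Q).eval (x : ℂ) = Complex.exp (-(φ0 * Complex.I)) *
      ((x : ℂ) * (pconj Q').eval (x : ℂ) + ((-1 : ℂ) ^ n * Complex.I) * P'.eval (x : ℂ))) :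
    phaseMat φ0 * (Rmat x * mat n P' Q' x) = mat (n + 1) P Q x := by
  have hs : ((Real.sqrt (1 - x ^ 2) : ℝ) : ℂ) ^ 2 = 1 - (x : ℂ) ^ 2 := by
    rw [← Complex.ofReal_pow, Real.sq_sqrt (by nlinarith [hx.1, hx.2])]
    push_cast; ring
  have hI : (Complex.I) ^ 2 = -1 := Complex.I_sq
  have he : ((-1 : ℂ)) ^ n * (-1 : ℂ) ^ n = 1 := by
    rw [← pow_add, ← two_mul, pow_mul]; norm_num
  ext i j
  fin_cases i <;> fin_cases j <;>
    simp [phaseMat, Rmat, mat, Matrix.mul_apply, Fin.sum_univ_two]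
  · rw [h1]
    linear_combination (Complex.exp (↑φ0 * Complex.I) * (-1 : ℂ) ^ n * Complex.I *
      Polynomial.eval (↑x : ℂ) (pconj Q')) * hs
  · rw [h2]
    linear_combination (Complex.exp (↑φ0 * Complex.I) * ((Real.sqrt (1 - x ^ 2) : ℝ) : ℂ) *
      (-1 : ℂ) ^ n * Polynomial.eval (↑x : ℂ) (pconj P')) * hI
  · rw [h4]
    linear_combination (Complex.exp (-(↑φ0 * Complex.I)) * ((Real.sqrt (1 - x ^ 2) : ℝ) : ℂ) *
        Polynomial.eval (↑x : ℂ) P' * ((-1 : ℂ) ^ n * (-1 : ℂ) ^ n)) * hI -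
      (Complex.exp (-(↑φ0 * Complex.I)) * ((Real.sqrt (1 - x ^ 2) : ℝ) : ℂ) *
        Polynomial.eval (↑x : ℂ) P') * he
  · rw [h3]
    linear_combination (Complex.exp (-(↑φ0 * Complex.I)) * Complex.I *
        Polynomial.eval (↑x : ℂ) Q') * hs -
      (Complex.exp (-(↑φ0 * Complex.I)) * Complex.I * (1 - ((x : ℝ) : ℂ) ^ 2) *
        Polynomial.eval (↑x : ℂ) Q') * he

lemma exp_mul_exp_neg (φ : ℝ) :
    Complex.exp (φ * Complex.I) * Complex.exp (-(φ * Complex.I)) = 1 := by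
  rw [← Complex.exp_add]; simp

lemma conj_exp_I (φ : ℝ) :
    (starRingEnd ℂ) (Complex.exp (φ * Complex.I)) = Complex.exp (-(φ * Complex.I)) := by
  rw [← Complex.exp_conj]; congr 1; simp [Complex.conj_ofReal]

lemma neg_pow_sq (n : ℕ) : ((-1 : ℂ)) ^ n * (-1 : ℂ) ^ n = 1 := by
  rw [← pow_add, ← two_mul, pow_mul]; norm_num

lemma c_sq (n : ℕ) : ((-1 : ℂ) ^ n * Complex.I) ^ 2 = -1 := by
  rw [mul_pow, Complex.I_sq, ← pow_mul, mul_comm n 2, pow_mul]; norm_num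

lemma conj_c (n : ℕ) :
    (starRingEnd ℂ) ((-1 : ℂ) ^ n * Complex.I) = -((-1 : ℂ) ^ n * Complex.I) := by
  simp [map_pow, Complex.conj_I, mul_comm]

lemma phase_eq_mat0 (a : ℂ) (φ : ℝ) (he : Complex.exp (φ * Complex.I) = a) (x : ℝ) :
    phaseMat φ = mat 0 (C a) 0 x := by
  have hconj : Complex.exp (-(φ * Complex.I)) = (starRingEnd ℂ) a := by
    rw [← he, conj_exp_I]
  ext i j
  fin_cases i <;> fin_cases j <;> simp [phaseMat, mat, pconj_zero, pconj_C, he, hconj]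

theorem key_forward (n : ℕ) (Φ : ℕ → ℝ) :
    ∃ P Q : Polynomial ℂ,
      P.degree ≤ (n : ℕ) ∧ Q.degree < (n : ℕ) ∧
      (∀ x : ℂ, P.eval (-x) = (-1 : ℂ) ^ n * P.eval x) ∧
      (∀ x : ℂ, Q.eval (-x) = (-1 : ℂ) ^ (n + 1) * Q.eval x) ∧
      (∀ x : ℂ, P.eval x * (pconj P).eval x + (1 - x ^ 2) * (Q.eval x * (pconj Q).eval x) = 1) ∧
      (∀ x : ℝ, x ∈ Set.Icc (-1 : ℝ) 1 → QSP n Φ x = mat n P Q x) := by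
  induction n generalizing Φ with
  | zero =>
    refine ⟨C (Complex.exp (Φ 0 * Complex.I)), 0, degree_C_le.trans (by simp),
      by simp [degree_zero], by simp, by simp, ?_, ?_⟩
    · intro x
      simp only [eval_C, pconj_C, conj_exp_I, eval_zero, mul_zero, add_zero, zero_mul]
      rw [exp_mul_exp_neg]
    · intro x hx
      rw [QSP_zero]
      exact phase_eq_mat0 _ _ rfl x
  | succ n ih =>
    obtain ⟨P', Q', hdP', hdQ', hpP', hpQ', hn', hm'⟩ := ih (fun k => Φ (k + 1))
    set e : ℂ := Complex.exp (Φ 0 * Complex.I) with he_def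
    set f : ℂ := Complex.exp (-(Φ 0 * Complex.I)) with hf_def
    set c : ℂ := (-1 : ℂ) ^ n * Complex.I with hc_def
    have hef : e * f = 1 := exp_mul_exp_neg _
    have hc : c ^ 2 = -1 := c_sq n
    have hce : (starRingEnd ℂ) e = f := conj_exp_I _
    have hcf : (starRingEnd ℂ) f = e := by
      rw [← hce, Complex.conj_conj]
    have hcc : (starRingEnd ℂ) c = -c := conj_c n
    refine ⟨C e * (P' * X + C c * (pconj Q' - pconj Q' * X ^ 2)),
            C e * (Q' * X - C c * pconj P'), ?_, ?_, ?_, ?_, ?_, ?_⟩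
    · -- degree P ≤ n+1
      rw [Polynomial.degree_le_iff_coeff_zero]
      intro m hm
      rw [Nat.cast_lt] at hm
      obtain ⟨k, rfl⟩ : ∃ k, m = k + 2 := ⟨m - 2, by omega⟩
      have h1 : P'.coeff (k + 1) = 0 :=
        coeff_eq_zero_of_degree_lt (lt_of_le_of_lt hdP' (Nat.cast_lt.2 (by omega)))
      have h2 : (pconj Q').coeff (k + 2) = 0 :=
        coeff_eq_zero_of_degree_lt (lt_of_lt_of_le ((pconj_degree Q') ▸ hdQ')
          (Nat.cast_le.2 (by omega)))
      have h3 : (pconj Q').coeff k = 0 :=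
        coeff_eq_zero_of_degree_lt (lt_of_lt_of_le ((pconj_degree Q') ▸ hdQ')
          (Nat.cast_le.2 (by omega)))
      simp [coeff_C_mul, coeff_add, coeff_sub, Polynomial.coeff_mul_X,
        show (pconj Q' * X ^ 2).coeff (k + 2) = (pconj Q').coeff k from
          Polynomial.coeff_mul_X_pow _ 2 k, h1, h2, h3]
    · -- degree Q < n+1
      rw [Polynomial.degree_lt_iff_coeff_zero]
      intro m hm
      obtain ⟨k, rfl⟩ : ∃ k, m = k + 1 := ⟨m - 1, by omega⟩
      have h1 : Q'.coeff k = 0 :=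
        coeff_eq_zero_of_degree_lt (lt_of_lt_of_le hdQ' (Nat.cast_le.2 (by omega)))
      have h2 : (pconj P').coeff (k + 1) = 0 :=
        coeff_eq_zero_of_degree_lt (lt_of_le_of_lt ((pconj_degree P') ▸ hdP')
          (Nat.cast_lt.2 (by omega)))
      simp [coeff_C_mul, coeff_sub, Polynomial.coeff_mul_X, h1, h2]
    · -- parity P
      intro x
      have e1 := hpP' x
      have e2 := parity_pconj Q' (n + 1) hpQ' x
      simp only [eval_mul, eval_add, eval_sub, eval_C, eval_X, eval_pow]
      linear_combination (-e * x) * e1 + (e * c * (1 - x ^ 2)) * e2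
    · -- parity Q
      intro x
      have e1 := hpQ' x
      have e2 := parity_pconj P' n hpP' x
      simp only [eval_mul, eval_add, eval_sub, eval_C, eval_X, eval_pow]
      linear_combination (-e * x) * e1 - (e * c) * e2
    · -- norm
      intro x
      refine alg_norm e f c x _ _ _ _ (P'.eval x) (Q'.eval x)
        ((pconj P').eval x) ((pconj Q').eval x) hef hc ?_ ?_ ?_ ?_ (hn' x)
      · simp only [eval_mul, eval_add, eval_sub, eval_C, eval_X, eval_pow]; ring
      · simp only [eval_mul, eval_add, eval_sub, eval_C, eval_X, eval_pow]; ring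
      · simp only [pconj_mul, pconj_add, pconj_sub, pconj_pow, pconj_C, pconj_X,
          pconj_pconj, hce, hcc, eval_mul, eval_add, eval_sub, eval_C, eval_X, eval_pow]
        ring
      · simp only [pconj_mul, pconj_add, pconj_sub, pconj_pow, pconj_C, pconj_X,
          pconj_pconj, hce, hcc, eval_mul, eval_add, eval_sub, eval_C, eval_X, eval_pow]
        ring
    · -- matrix
      intro x hx
      rw [QSP_succ, hm' x hx]
      refine mat_step n (Φ 0) _ _ P' Q' x hx ?_ ?_ ?_ ?_
      · simp only [eval_mul, eval_add, eval_sub, eval_C, eval_X, eval_pow]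
        rw [← he_def, ← hc_def]; ring
      · simp only [eval_mul, eval_add, eval_sub, eval_C, eval_X, eval_pow]
        rw [← he_def, ← hc_def]; ring
      · simp only [pconj_mul, pconj_add, pconj_sub, pconj_pow, pconj_C, pconj_X,
          pconj_pconj, hce, hcc, eval_mul, eval_add, eval_sub, eval_C, eval_X, eval_pow]
        rw [← hf_def, ← hc_def]; ring
      · simp only [pconj_mul, pconj_add, pconj_sub, pconj_pow, pconj_C, pconj_X,
          pconj_pconj, hce, hcc, eval_mul, eval_add, eval_sub, eval_C, eval_X, eval_pow]
        rw [← hf_def, ← hc_def]; ring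

lemma degree_le_of_lt_succ {Q : Polynomial ℂ} {n : ℕ} (h : Q.degree < ((n + 1 : ℕ) : WithBot ℕ)) :
    Q.degree ≤ (n : ℕ) := by
  rw [Polynomial.degree_le_iff_coeff_zero]
  intro m hm
  rw [Nat.cast_lt] at hm
  exact Polynomial.coeff_eq_zero_of_degree_lt (lt_of_lt_of_le h (Nat.cast_le.2 (by omega)))

lemma coeff_mul_top (p q : Polynomial ℂ) (d e : ℕ) (hp : p.degree ≤ (d : ℕ))
    (hq : q.degree ≤ (e : ℕ)) : (p * q).coeff (d + e) = p.coeff d * q.coeff e := by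
  rw [Polynomial.coeff_mul]
  rw [Finset.sum_eq_single ((d, e) : ℕ × ℕ)]
  · intro b hb hne
    rw [Finset.HasAntidiagonal.mem_antidiagonal] at hb
    rcases Nat.lt_or_ge d b.1 with h1 | h1
    · rw [Polynomial.coeff_eq_zero_of_degree_lt (lt_of_le_of_lt hp (Nat.cast_lt.2 h1)), zero_mul]
    · have h2 : e < b.2 := by
        rcases Nat.lt_or_ge e b.2 with h' | h'
        · exact h'
        · exfalso; apply hne
          have : b.1 = d := by omega
          have : b.2 = e := by omega
          exact Prod.ext (by omega) (by omega)
      rw [Polynomial.coeff_eq_zero_of_degree_lt (lt_of_le_of_lt hq (Nat.cast_lt.2 h2)), mul_zero]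
  · intro h
    exfalso; exact h (Finset.HasAntidiagonal.mem_antidiagonal.2 rfl)

theorem key_reverse (n : ℕ) (P Q : Polynomial ℂ)
    (hdP : P.degree ≤ (n : ℕ)) (hdQ : Q.degree < (n : ℕ))
    (hparP : ∀ x : ℂ, P.eval (-x) = (-1 : ℂ) ^ n * P.eval x)
    (hparQ : ∀ x : ℂ, Q.eval (-x) = (-1 : ℂ) ^ (n + 1) * Q.eval x)
    (hnorm : P * pconj P + (1 - X ^ 2) * (Q * pconj Q) = 1) :
    ∃ Φ : ℕ → ℝ, ∀ x : ℝ, x ∈ Set.Icc (-1 : ℝ) 1 → QSP n Φ x = mat n P Q x := by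
  induction n generalizing P Q with
  | zero =>
    have hQ0 : Q = 0 := by
      by_contra h
      exact absurd ((Polynomial.zero_le_degree_iff).2 h) (not_le.2 (by simpa using hdQ))
    have hP : P = C (P.coeff 0) := Polynomial.eq_C_of_degree_le_zero (by simpa using hdP)
    set a : ℂ := P.coeff 0 with ha_def
    have haa : a * (starRingEnd ℂ) a = 1 := by
      have := congrArg (Polynomial.eval 0) hnorm
      rw [hP, hQ0] at this
      simpa [pconj_C, pconj_zero] using this
    have habs : ‖a‖ = 1 := by
      have h1 : (Complex.normSq a : ℂ) = 1 := by rw [← Complex.mul_conj]; exact haa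
      have h2 : Complex.normSq a = 1 := by exact_mod_cast h1
      rw [Complex.norm_def, h2, Real.sqrt_one]
    have he : Complex.exp (a.arg * Complex.I) = a := by
      have := Complex.norm_mul_exp_arg_mul_I a
      rwa [habs, Complex.ofReal_one, one_mul] at this
    refine ⟨fun _ => a.arg, fun x hx => ?_⟩
    rw [QSP_zero, hP, hQ0]
    exact phase_eq_mat0 a a.arg he x
  | succ n ih =>
    set a : ℂ := P.coeff (n + 1) with ha_def
    set b : ℂ := Q.coeff n with hb_def
    set cc : ℂ := (-1 : ℂ) ^ n * Complex.I with hcc_def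
    have hQle : Q.degree ≤ (n : ℕ) := degree_le_of_lt_succ hdQ
    have hcoQ : ∀ k, n < k → Q.coeff k = 0 := fun k hk =>
      Polynomial.coeff_eq_zero_of_degree_lt (lt_of_le_of_lt hQle (Nat.cast_lt.2 hk))
    have hcoP : ∀ k, n + 1 < k → P.coeff k = 0 := fun k hk =>
      Polynomial.coeff_eq_zero_of_degree_lt (lt_of_le_of_lt hdP (Nat.cast_lt.2 hk))
    have hparcoP : ∀ k, k % 2 ≠ (n + 1) % 2 → P.coeff k = 0 := fun k hk =>
      coeff_eq_zero_of_parity P _ hparP k (neg_one_pow_ne k (n + 1) hk)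
    have hparcoQ : ∀ k, k % 2 ≠ n % 2 → Q.coeff k = 0 := fun k hk =>
      coeff_eq_zero_of_parity Q _ hparQ k (neg_one_pow_ne k (n + 2) (by omega))
    -- |a| = |b|
    have habs : a * (starRingEnd ℂ) a = b * (starRingEnd ℂ) b := by
      have hco := congrArg (fun r : Polynomial ℂ => r.coeff (n + 1 + (n + 1))) hnorm
      simp only [Polynomial.coeff_add] at hco
      rw [coeff_mul_top P (pconj P) (n + 1) (n + 1) hdP ((pconj_degree P) ▸ hdP)] at hco
      rw [sub_mul, one_mul, Polynomial.coeff_sub] at hco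
      have e1 : (Q * pconj Q).coeff (n + 1 + (n + 1)) = 0 := by
        apply Polynomial.coeff_eq_zero_of_degree_lt
        calc (Q * pconj Q).degree ≤ Q.degree + (pconj Q).degree := Polynomial.degree_mul_le _ _
        _ ≤ (n : ℕ) + (n : ℕ) := add_le_add hQle ((pconj_degree Q) ▸ hQle)
        _ < ((n + 1 + (n + 1) : ℕ) : WithBot ℕ) := by
            rw [← Nat.cast_add, Nat.cast_lt]; omega
      have e2 : (X ^ 2 * (Q * pconj Q)).coeff (n + 1 + (n + 1)) = b * (starRingEnd ℂ) b := by
        rw [show n + 1 + (n + 1) = n + n + 2 by omega, Polynomial.coeff_X_pow_mul]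
        rw [coeff_mul_top Q (pconj Q) n n hQle ((pconj_degree Q) ▸ hQle), pconj_coeff]
      rw [e1, e2, pconj_coeff] at hco
      have : (1 : Polynomial ℂ).coeff (n + 1 + (n + 1)) = 0 := by
        rw [Polynomial.coeff_one]; simp
      rw [this] at hco
      linear_combination hco
    have hcsq : cc ^ 2 = -1 := c_sq n
    -- choose the phase
    obtain ⟨φ0, hco1, hco2⟩ : ∃ φ0 : ℝ,
        Complex.exp (-(φ0 * Complex.I)) * a +
          cc * Complex.exp (φ0 * Complex.I) * (starRingEnd ℂ) b = 0 ∧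
        Complex.exp (-(φ0 * Complex.I)) * b +
          cc * Complex.exp (φ0 * Complex.I) * (starRingEnd ℂ) a = 0 := by
      by_cases ha : a = 0
      · have hb : b = 0 := by
          have h1 : (Complex.normSq b : ℂ) = 0 := by
            rw [← Complex.mul_conj, ← habs, ha, zero_mul]
          exact Complex.normSq_eq_zero.1 (by exact_mod_cast h1)
        exact ⟨0, by simp [ha, hb], by simp [ha, hb]⟩
      · have hb : b ≠ 0 := by
          intro hb
          apply ha
          have h1 : (Complex.normSq a : ℂ) = 0 := by
            rw [← Complex.mul_conj, habs, hb, zero_mul]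
          exact Complex.normSq_eq_zero.1 (by exact_mod_cast h1)
        have hbc : (starRingEnd ℂ) b ≠ 0 := by simpa using hb
        have habs' : ‖a‖ = ‖b‖ := by
          have h1 : (Complex.normSq a : ℂ) = Complex.normSq b := by
            rw [← Complex.mul_conj, ← Complex.mul_conj]; exact habs
          have h2 : Complex.normSq a = Complex.normSq b := by exact_mod_cast h1
          rw [Complex.norm_def, Complex.norm_def, h2]
        set z : ℂ := a * cc / (starRingEnd ℂ) b with hz_def
        have hzabs : ‖z‖ = 1 := by
          rw [hz_def, norm_div, norm_mul, Complex.norm_conj, ← habs']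
          have hc1 : ‖cc‖ = 1 := by
            rw [hcc_def, norm_mul, norm_pow]; simp
          rw [hc1, mul_one, div_self (by simpa using ha)]
        have hzne : Complex.exp ((z.arg / 2 : ℝ) * Complex.I) ≠ 0 := Complex.exp_ne_zero _
        have he2 : Complex.exp ((z.arg / 2 : ℝ) * Complex.I) ^ 2 = z := by
          rw [sq, ← Complex.exp_add]
          rw [show ((z.arg / 2 : ℝ) : ℂ) * Complex.I + ((z.arg / 2 : ℝ) : ℂ) * Complex.I
            = (z.arg : ℂ) * Complex.I by push_cast; ring]
          have := Complex.norm_mul_exp_arg_mul_I z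
          rwa [hzabs, Complex.ofReal_one, one_mul] at this
        have hef : Complex.exp ((z.arg / 2 : ℝ) * Complex.I) *
            Complex.exp (-((z.arg / 2 : ℝ) * Complex.I)) = 1 := exp_mul_exp_neg _
        refine ⟨z.arg / 2, ?_, ?_⟩
        · have hkey : Complex.exp ((z.arg / 2 : ℝ) * Complex.I) *
              (Complex.exp (-((z.arg / 2 : ℝ) * Complex.I)) * a +
               cc * Complex.exp ((z.arg / 2 : ℝ) * Complex.I) * (starRingEnd ℂ) b) = 0 := by
            have expand : Complex.exp ((z.arg / 2 : ℝ) * Complex.I) *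
                (Complex.exp (-((z.arg / 2 : ℝ) * Complex.I)) * a +
                 cc * Complex.exp ((z.arg / 2 : ℝ) * Complex.I) * (starRingEnd ℂ) b)
                = a + cc * z * (starRingEnd ℂ) b := by
              linear_combination a * hef + (cc * (starRingEnd ℂ) b) * he2
            rw [expand]
            have e1 : cc * z * (starRingEnd ℂ) b = a * cc ^ 2 * ((starRingEnd ℂ) b / (starRingEnd ℂ) b) := by
              rw [hz_def]; ring
            rw [e1, div_self hbc, mul_one, hcsq]; ring
          rcases mul_eq_zero.1 hkey with h' | h'
          · exact absurd h' hzne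
          · exact h'
        · have hkey : Complex.exp ((z.arg / 2 : ℝ) * Complex.I) *
              (Complex.exp (-((z.arg / 2 : ℝ) * Complex.I)) * b +
               cc * Complex.exp ((z.arg / 2 : ℝ) * Complex.I) * (starRingEnd ℂ) a) = 0 := by
            have expand : Complex.exp ((z.arg / 2 : ℝ) * Complex.I) *
                (Complex.exp (-((z.arg / 2 : ℝ) * Complex.I)) * b +
                 cc * Complex.exp ((z.arg / 2 : ℝ) * Complex.I) * (starRingEnd ℂ) a)
                = b + cc * z * (starRingEnd ℂ) a := by
              linear_combination b * hef + (cc * (starRingEnd ℂ) a) * he2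
            rw [expand]
            have e2 : cc * z * (starRingEnd ℂ) a = cc ^ 2 * (a * (starRingEnd ℂ) a) / (starRingEnd ℂ) b := by
              rw [hz_def]; ring
            rw [e2, hcsq, habs]
            have e3 : (-1 : ℂ) * (b * (starRingEnd ℂ) b) / (starRingEnd ℂ) b = -b := by
              rw [neg_one_mul, neg_div, mul_div_cancel_right₀ _ hbc]
            rw [e3]; ring
          rcases mul_eq_zero.1 hkey with h' | h'
          · exact absurd h' hzne
          · exact h'
    set e : ℂ := Complex.exp (φ0 * Complex.I) with he_def
    set f : ℂ := Complex.exp (-(φ0 * Complex.I)) with hf_def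
    have hef : e * f = 1 := exp_mul_exp_neg _
    have hce : (starRingEnd ℂ) e = f := conj_exp_I _
    have hcf : (starRingEnd ℂ) f = e := by rw [← hce, Complex.conj_conj]
    have hccc : (starRingEnd ℂ) cc = -cc := by rw [hcc_def]; exact conj_c n
    set P' : Polynomial ℂ := C f * (P * X) - C (cc * e) * (pconj Q - pconj Q * X ^ 2) with hP'_def
    set Q' : Polynomial ℂ := C f * (Q * X) + C (cc * e) * pconj P with hQ'_def
    have hp'ev : ∀ z : ℂ, P'.eval z
        = f * z * P.eval z - cc * e * (1 - z ^ 2) * (pconj Q).eval z := by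
      intro z; rw [hP'_def]
      simp only [eval_mul, eval_sub, eval_add, eval_C, eval_X, eval_pow]; ring
    have hq'ev : ∀ z : ℂ, Q'.eval z = f * z * Q.eval z + cc * e * (pconj P).eval z := by
      intro z; rw [hQ'_def]
      simp only [eval_mul, eval_sub, eval_add, eval_C, eval_X, eval_pow]; ring
    have hpc'ev : ∀ z : ℂ, (pconj P').eval z
        = e * z * (pconj P).eval z + cc * f * (1 - z ^ 2) * Q.eval z := by
      intro z; rw [hP'_def]
      simp only [pconj_sub, pconj_mul, pconj_add, pconj_C, pconj_X, pconj_pow, pconj_pconj,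
        _root_.map_mul, hce, hcf, hccc, eval_mul, eval_sub, eval_add, eval_C, eval_X, eval_pow]
      ring
    have hqc'ev : ∀ z : ℂ, (pconj Q').eval z
        = e * z * (pconj Q).eval z - cc * f * P.eval z := by
      intro z; rw [hQ'_def]
      simp only [pconj_sub, pconj_mul, pconj_add, pconj_C, pconj_X, pconj_pow, pconj_pconj,
        _root_.map_mul, hce, hcf, hccc, eval_mul, eval_sub, eval_add, eval_C, eval_X, eval_pow]
      ring
    have h1 : ∀ z : ℂ, P.eval z
        = e * (z * P'.eval z + cc * (1 - z ^ 2) * (pconj Q').eval z) := by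
      intro z; rw [hp'ev z, hqc'ev z]
      linear_combination (-(P.eval z)) * hef + (e * f * (1 - z ^ 2) * (P.eval z)) * hcsq
    have h2 : ∀ z : ℂ, Q.eval z = e * (z * Q'.eval z - cc * (pconj P').eval z) := by
      intro z; rw [hq'ev z, hpc'ev z]
      linear_combination (-(Q.eval z)) * hef + (e * f * (1 - z ^ 2) * (Q.eval z)) * hcsq
    have h3 : ∀ z : ℂ, (pconj P).eval z
        = f * (z * (pconj P').eval z - cc * (1 - z ^ 2) * Q'.eval z) := by
      intro z; rw [hpc'ev z, hq'ev z]
      linear_combination (-((pconj P).eval z)) * hef +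
        (e * f * (1 - z ^ 2) * ((pconj P).eval z)) * hcsq
    have h4 : ∀ z : ℂ, (pconj Q).eval z
        = f * (z * (pconj Q').eval z + cc * P'.eval z) := by
      intro z; rw [hqc'ev z, hp'ev z]
      linear_combination (-((pconj Q).eval z)) * hef +
        (e * f * (1 - z ^ 2) * ((pconj Q).eval z)) * hcsq
    have hout : ∀ z : ℂ, P.eval z * (pconj P).eval z
        + (1 - z ^ 2) * (Q.eval z * (pconj Q).eval z) = 1 := by
      intro z
      have := congrArg (Polynomial.eval z) hnorm
      simp only [eval_add, eval_mul, eval_sub, eval_pow, eval_one, eval_X] at this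
      linear_combination this
    have hinner : ∀ z : ℂ, P'.eval z * (pconj P').eval z
        + (1 - z ^ 2) * (Q'.eval z * (pconj Q').eval z) = 1 := fun z =>
      alg_norm_rev e f cc z _ _ _ _ _ _ _ _ hef hcsq (h1 z) (h2 z) (h3 z) (h4 z) (hout z)
    have hnorm' : P' * pconj P' + (1 - X ^ 2) * (Q' * pconj Q') = 1 := by
      apply Polynomial.funext; intro z
      simp only [eval_add, eval_mul, eval_sub, eval_pow, eval_one, eval_X]
      linear_combination hinner z
    have hparP' : ∀ z : ℂ, P'.eval (-z) = (-1 : ℂ) ^ n * P'.eval z := by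
      intro z
      have e1 := hparP z
      have e2 := parity_pconj Q (n + 1 + 1) hparQ z
      rw [hp'ev, hp'ev, e1, e2]
      rw [hcc_def]; ring
    have hparQ' : ∀ z : ℂ, Q'.eval (-z) = (-1 : ℂ) ^ (n + 1) * Q'.eval z := by
      intro z
      have e1 := hparQ z
      have e2 := parity_pconj P (n + 1) hparP z
      rw [hq'ev, hq'ev, e1, e2]
      rw [hcc_def]; ring
    have hdP' : P'.degree ≤ (n : ℕ) := by
      rw [Polynomial.degree_le_iff_coeff_zero]
      intro m hm
      rw [Nat.cast_lt] at hm
      obtain ⟨k, rfl⟩ : ∃ k, m = k + 1 := ⟨m - 1, by omega⟩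
      rw [hP'_def, Polynomial.coeff_sub, Polynomial.coeff_C_mul, Polynomial.coeff_C_mul,
        Polynomial.coeff_mul_X, Polynomial.coeff_sub, Polynomial.coeff_mul_X_pow',
        pconj_coeff, pconj_coeff]
      rcases (by omega : k = n ∨ k = n + 1 ∨ n + 2 ≤ k) with hk | hk | hk
      · rw [hk, hparcoP n (by omega), hcoQ (n + 1) (by omega)]
        split_ifs with hif
        · rw [hparcoQ (n + 1 - 2) (by omega)]; simp
        · simp
      · rw [hk, if_pos (by omega : 2 ≤ n + 1 + 1), show n + 1 + 1 - 2 = n from by omega,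
          hcoQ (n + 1 + 1) (by omega), ← ha_def, ← hb_def]
        simp only [map_zero]
        linear_combination hco1
      · rw [hcoP k (by omega), hcoQ (k + 1) (by omega)]
        split_ifs with hif
        · rw [hcoQ (k + 1 - 2) (by omega)]; simp
        · simp
    have hdQ' : Q'.degree < ((n : ℕ) : WithBot ℕ) := by
      rw [Polynomial.degree_lt_iff_coeff_zero]
      intro m hm
      rw [hQ'_def, Polynomial.coeff_add, Polynomial.coeff_C_mul, Polynomial.coeff_C_mul,
        pconj_coeff]
      by_cases hm0 : m = 0
      · subst hm0
        rw [Polynomial.mul_coeff_zero, Polynomial.coeff_X_zero, hparcoP 0 (by omega)]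
        simp
      · obtain ⟨k, rfl⟩ : ∃ k, m = k + 1 := ⟨m - 1, by omega⟩
        rw [Polynomial.coeff_mul_X]
        rcases (by omega : (k + 1 = n ∧ 1 ≤ n) ∨ k = n ∨ n + 1 ≤ k) with ⟨hk, hk1⟩ | hk | hk
        · rw [hparcoQ k (by omega), hparcoP (k + 1) (by omega)]; simp
        · rw [hk, ← ha_def, ← hb_def]
          linear_combination hco2
        · rw [hcoQ k (by omega), hcoP (k + 1) (by omega)]; simp
    obtain ⟨Φ', hΦ'⟩ := ih P' Q' hdP' hdQ' hparP' hparQ' hnorm'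
    refine ⟨fun k => Nat.casesOn k φ0 (fun j => Φ' j), fun x hx => ?_⟩
    have hcongr : QSP n (fun k : ℕ => Nat.casesOn (k + 1) φ0 (fun j => Φ' j)) x
        = QSP n Φ' x := by
      congr 1
    rw [QSP_succ]
    rw [hcongr, hΦ' x hx]
    exact mat_step n φ0 P Q P' Q' x hx (h1 _) (h2 _) (h3 _) (h4 _)

/-- **Characterization of QSP-achievable polynomials** (Theorem A.2). A degree-`n`
polynomial `p ∈ ℂ[X]` is QSP-achievable iff there is a `q ∈ ℂ[X]` with
`deg q ≤ n - 1`, `(p, q)` of parities (even, odd) or (odd, even), and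
`|p(x)|² + (1 - x²)|q(x)|² = 1` for all real `x`. -/
theorem qsp_achievable_characterization (n : ℕ) (p : Polynomial ℂ) (hp : p.degree = n) :
    (∃ Φ : ℕ → ℝ, ∀ x : ℝ, x ∈ Set.Icc (-1 : ℝ) 1 → (QSP n Φ x) 0 0 = p.eval (x : ℂ)) ↔
    (∃ q : Polynomial ℂ,
      q.degree < n ∧
      (((∀ x : ℂ, p.eval (-x) = p.eval x) ∧ (∀ x : ℂ, q.eval (-x) = -q.eval x)) ∨
       ((∀ x : ℂ, p.eval (-x) = -p.eval x) ∧ (∀ x : ℂ, q.eval (-x) = q.eval x))) ∧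
      (∀ x : ℝ, ‖p.eval (x : ℂ)‖ ^ 2 + (1 - x ^ 2) * ‖q.eval (x : ℂ)‖ ^ 2 = 1)) := by
  constructor
  · rintro ⟨Φ, hΦ⟩
    obtain ⟨P, Q, hdP, hdQ, hparP, hparQ, hnorm, hmat⟩ := key_forward n Φ
    have hicc : Set.Infinite ((fun t : ℝ => (t : ℂ)) '' Set.Icc (-1 : ℝ) 1) :=
      Set.Infinite.image (fun a _ b _ h => Complex.ofReal_inj.1 h)
        (Set.Icc_infinite (by norm_num))
    have hPp : P = p := by
      apply Polynomial.eq_of_infinite_eval_eq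
      apply hicc.mono
      rintro z ⟨t, ht, rfl⟩
      have h1 := hΦ t ht
      have h2 := hmat t ht
      rw [h2] at h1
      simp only [mat, Matrix.cons_val', Matrix.cons_val_zero, Matrix.empty_val',
        Matrix.cons_val_fin_one] at h1
      simp only [Set.mem_setOf_eq]
      exact h1
    subst hPp
    refine ⟨Q, hdQ, ?_, ?_⟩
    · rcases Nat.even_or_odd n with he | ho
      · left
        refine ⟨fun x => by rw [hparP x, Even.neg_one_pow he, one_mul], fun x => ?_⟩
        rw [hparQ x, Odd.neg_one_pow (Even.add_one he), neg_one_mul]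
      · right
        refine ⟨fun x => by rw [hparP x, Odd.neg_one_pow ho, neg_one_mul], fun x => ?_⟩
        rw [hparQ x, Even.neg_one_pow (Odd.add_one ho), one_mul]
    · intro x
      have h := hnorm (x : ℂ)
      rw [pconj_eval, pconj_eval, Complex.conj_ofReal, Complex.mul_conj,
        Complex.mul_conj] at h
      rw [Complex.sq_norm, Complex.sq_norm]
      exact_mod_cast h
  · rintro ⟨q, hdq, hpar, hnrm⟩
    have hpne : p ≠ 0 := by
      intro h
      rw [h, Polynomial.degree_zero] at hp
      exact absurd hp.symm (by simp)
    have hlc : p.coeff n ≠ 0 := by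
      have hnd : p.natDegree = n := Polynomial.natDegree_eq_of_degree_eq_some hp
      rw [← hnd]
      exact Polynomial.leadingCoeff_ne_zero.2 hpne
    have hnormP : p * pconj p + (1 - X ^ 2) * (q * pconj q) = 1 := by
      apply Polynomial.eq_of_infinite_eval_eq
      apply Set.Infinite.mono ?_ (Set.infinite_range_of_injective Complex.ofReal_injective)
      rintro z ⟨t, rfl⟩
      simp only [Set.mem_setOf_eq, eval_add, eval_mul, eval_sub, eval_pow, eval_one, eval_X]
      rw [pconj_eval, pconj_eval, Complex.conj_ofReal, Complex.mul_conj, Complex.mul_conj]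
      have h := hnrm t
      rw [Complex.sq_norm, Complex.sq_norm] at h
      exact_mod_cast h
    have hexists : (∀ x : ℂ, p.eval (-x) = (-1 : ℂ) ^ n * p.eval x) ∧
        (∀ x : ℂ, q.eval (-x) = (-1 : ℂ) ^ (n + 1) * q.eval x) := by
      rcases hpar with ⟨hpe, hqo⟩ | ⟨hpo, hqe⟩ <;> rcases Nat.even_or_odd n with hn | hn
      · exact ⟨fun x => by rw [Even.neg_one_pow hn, one_mul]; exact hpe x,
          fun x => by rw [Odd.neg_one_pow (Even.add_one hn), neg_one_mul]; exact hqo x⟩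
      · exact absurd (coeff_eq_zero_of_parity p 1 (fun x => by rw [one_mul]; exact hpe x) n
          (by rw [Odd.neg_one_pow hn]; norm_num)) hlc
      · exact absurd (coeff_eq_zero_of_parity p (-1) (fun x => by rw [neg_one_mul]; exact hpo x)
          n (by rw [Even.neg_one_pow hn]; norm_num)) hlc
      · exact ⟨fun x => by rw [Odd.neg_one_pow hn, neg_one_mul]; exact hpo x,
          fun x => by rw [Even.neg_one_pow (Odd.add_one hn), one_mul]; exact hqe x⟩
    obtain ⟨Φ, hΦ⟩ := key_reverse n p q hp.le hdq hexists.1 hexists.2 hnormP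
    refine ⟨Φ, fun x hx => ?_⟩
    rw [hΦ x hx]
    simp [mat]
end

section
/- Let U be a d×d unitary matrix over ℂ, let B_L be a d×r and B_R a d×c complex matrix with orthonormal columns (B_Lᴴ B_L = I_r and B_Rᴴ B_R = I_c), and set Π_L = B_L B_Lᴴ, Π_R = B_R B_Rᴴ, and M = Π_L U Π_R. Let n ≥ 2 be even, Φ = (φ_0, …, φ_n) ∈ ℝ^{n+1}, and let p ∈ ℂ[X] be an even polynomial with deg p ≤ n, writing p(X) = g(X²) for some g ∈ ℂ[X], such that for all x ∈ [−1, 1] the (0,0) entry of QSP(Φ, x) equals p(x). Then Π_R · U_Φ · Π_R = Π_R · g(Mᴴ M) · Π_R, where g is applied to the d×d matrix Mᴴ M via polynomial evaluation. -/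
open Matrix Complex Polynomial

/-- `E(φ, Π) = e^{iφ}·Π + e^{-iφ}·(I - Π) = e^{iφ(2Π - I)}`. -/
noncomputable def Emat {m : Type*} [Fintype m] [DecidableEq m]
    (φ : ℝ) (P : Matrix m m ℂ) : Matrix m m ℂ :=
  Complex.exp (φ * Complex.I) • P + Complex.exp (-(φ * Complex.I)) • (1 - P)

/-- The phased alternating sequence `U_Φ` for even `n`:
`E(φ₀, Π_R)·∏_{j=1}^{n/2} [Uᴴ·E(φ_{2j-1}, Π_L)·U·E(φ_{2j}, Π_R)]`. -/
noncomputable def phasedAltSeqEven {m : Type*} [Fintype m] [DecidableEq m]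
    (U PL PR : Matrix m m ℂ) (n : ℕ) (Φ : ℕ → ℝ) : Matrix m m ℂ :=
  Emat (Φ 0) PR *
    ((List.range (n / 2)).map
      (fun j => Uᴴ * Emat (Φ (2 * j + 1)) PL * U * Emat (Φ (2 * j + 2)) PR)).prod

/- ### Auxiliary material -/

lemma list_prod_range_two_mul {M : Type*} [Monoid M] (f : ℕ → M) (m : ℕ) :
    ((List.range (2*m)).map f).prod
      = ((List.range m).map (fun j => f (2*j) * f (2*j+1))).prod := by
  induction m with
  | zero => simp
  | succ m ih =>
    have h2 : 2*(m+1) = (2*m+1)+1 := by ring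
    rw [h2, List.range_succ, List.range_succ, List.range_succ]
    simp [ih, mul_assoc]

lemma aeval_diagonal {n : Type*} [Fintype n] [DecidableEq n] (v : n → ℂ) (q : Polynomial ℂ) :
    aeval (Matrix.diagonal v) q = Matrix.diagonal (fun i => q.eval (v i)) := by
  induction q using Polynomial.induction_on' with
  | add p q hp hq => simp [hp, hq, Matrix.diagonal_add]
  | monomial n a =>
    rw [aeval_monomial, Matrix.diagonal_pow, Matrix.algebraMap_eq_diagonal,
      Matrix.diagonal_mul_diagonal]
    ext i j
    by_cases h : i = j <;> simp [Matrix.diagonal, h, eval_monomial]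

lemma Emat_eq {m : Type*} [Fintype m] [DecidableEq m] (φ : ℝ) (P : Matrix m m ℂ) :
    Emat φ P = Complex.exp (-(φ * Complex.I)) • (1 : Matrix m m ℂ)
      + (Complex.exp (φ * Complex.I) - Complex.exp (-(φ * Complex.I))) • P := by
  unfold Emat; module

lemma Emat_conj {m : Type*} [Fintype m] [DecidableEq m] (V W Q : Matrix m m ℂ)
    (hVW : V * W = 1) (ψ : ℝ) :
    V * Emat ψ Q * W = Emat ψ (V * Q * W) := by
  have h : V * ((1 : Matrix m m ℂ) - Q) * W = 1 - V * Q * W := by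
    rw [mul_sub, sub_mul, mul_one, hVW]
  unfold Emat
  rw [mul_add, add_mul, mul_smul_comm, smul_mul_assoc, mul_smul_comm, smul_mul_assoc, h]

/-- Scalar (polynomial) recursion tracking the block structure of the alternating sequence. -/
noncomputable def qsvtAB (Φ : ℕ → ℝ) : ℕ → Polynomial ℂ × Polynomial ℂ
  | 0 => (Polynomial.C (Complex.exp (Φ 0 * Complex.I)), 0)
  | (k+1) =>
    let a := (qsvtAB Φ k).1
    let b := (qsvtAB Φ k).2
    let γ := Complex.exp (-(Φ (2*k+1) * Complex.I))
    let δ := Complex.exp (Φ (2*k+1) * Complex.I) - γ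
    let ε := Complex.exp (-(Φ (2*k+2) * Complex.I))
    let ζ := Complex.exp (Φ (2*k+2) * Complex.I) - ε
    (Polynomial.C ((ε+ζ)*γ) * a
        + Polynomial.C ζ * Polynomial.X * (Polynomial.C δ * a + Polynomial.C (γ+δ) * b),
     Polynomial.C ε * (Polynomial.C δ * a + Polynomial.C (γ+δ) * b))

section Core

variable {D : Type*} [Fintype D] [DecidableEq D] (P C : Matrix D D ℂ)

lemma comm_aeval (hP : P * P = P) (q : Polynomial ℂ) :
    P * aeval (P*C*P) q = aeval (P*C*P) q * P := by
  have h1 : Commute P (P*C*P) := by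
    show P * (P*C*P) = (P*C*P) * P
    rw [show P * (P*C*P) = (P*P)*C*P by noncomm_ring, hP,
        show (P*C*P)*P = P*C*(P*P) by noncomm_ring, hP]
  induction q using Polynomial.induction_on' with
  | add p q hp hq => simp [mul_add, add_mul, hp, hq]
  | monomial n a =>
    rw [aeval_monomial, Algebra.algebraMap_eq_smul_one]
    simp only [smul_mul_assoc, one_mul, mul_smul_comm]
    rw [(h1.pow_right n).eq]

lemma core (hP : P * P = P) (hC : C * C = C) (Φ : ℕ → ℝ) (k : ℕ) :
    P * (Emat (Φ 0) P *
        ((List.range k).map (fun j => Emat (Φ (2*j+1)) C * Emat (Φ (2*j+2)) P)).prod)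
      = aeval (P*C*P) (qsvtAB Φ k).1 * P + aeval (P*C*P) (qsvtAB Φ k).2 * (P*C) := by
  set A := P*C*P with hA
  have hPA : A * P = A := by rw [hA, show P*C*P*P = P*C*(P*P) by noncomm_ring, hP]
  induction k with
  | zero =>
    simp only [qsvtAB, List.range_zero, List.map_nil, List.prod_nil, mul_one]
    rw [Emat_eq]
    simp only [mul_add, mul_smul_comm, mul_one, hP, _root_.map_mul, aeval_C, map_zero,
      zero_mul, add_zero]
    rw [Algebra.algebraMap_eq_smul_one, smul_mul_assoc, one_mul]
    module
  | succ k ih =>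
    rw [List.range_succ, List.map_append, List.prod_append, List.map_singleton,
      List.prod_singleton, ← mul_assoc (Emat (Φ 0) P), ← mul_assoc P, ih]
    set a := (qsvtAB Φ k).1
    set b := (qsvtAB Φ k).2
    set γ := Complex.exp (-(Φ (2*k+1) * Complex.I)) with hγ
    set δ := Complex.exp (Φ (2*k+1) * Complex.I) - γ with hδ
    set ε := Complex.exp (-(Φ (2*k+2) * Complex.I)) with hε
    set ζ := Complex.exp (Φ (2*k+2) * Complex.I) - ε with hζ
    have hstep : (qsvtAB Φ (k+1)) =
        (Polynomial.C ((ε+ζ)*γ) * a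
            + Polynomial.C ζ * Polynomial.X * (Polynomial.C δ * a + Polynomial.C (γ+δ) * b),
         Polynomial.C ε * (Polynomial.C δ * a + Polynomial.C (γ+δ) * b)) := rfl
    rw [hstep]
    set α := aeval A a with hα
    set β := aeval A b with hβ
    have hcα : A * α = α * A := by
      rw [hα, show A * aeval A a = aeval A (Polynomial.X * a) by simp [aeval_X],
        show aeval A a * A = aeval A (a * Polynomial.X) by simp [aeval_X], mul_comm]
    have hcβ : A * β = β * A := by
      rw [hβ, show A * aeval A b = aeval A (Polynomial.X * b) by simp [aeval_X],
        show aeval A b * A = aeval A (b * Polynomial.X) by simp [aeval_X], mul_comm]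
    rw [Emat_eq (Φ (2*k+1)) C, Emat_eq (Φ (2*k+2)) P, ← hγ, ← hδ, ← hε, ← hζ]
    set σ := δ • α + (γ+δ) • β with hσ
    have key : A * σ * P = σ * A := by
      have h1 : A * σ = σ * A := by
        rw [hσ]; rw [mul_add, add_mul, mul_smul_comm, mul_smul_comm, smul_mul_assoc,
          smul_mul_assoc, hcα, hcβ]
      rw [h1, mul_assoc, hPA]
    have hPCC : (P*C)*C = P*C := by rw [mul_assoc, hC]
    have hPCP : (P*C)*P = A := rfl
    have expand : (α * P + β * (P*C)) *
          ((γ • (1:Matrix D D ℂ) + δ • C) * (ε • (1:Matrix D D ℂ) + ζ • P))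
        = (ε+ζ) • (γ • (α * P)) + ζ • (σ * A) + ε • (σ * (P*C)) := by
      have e1 : (α * P + β * (P*C)) * (γ • (1:Matrix D D ℂ) + δ • C)
          = γ • (α * P) + σ * (P*C) := by
        rw [hσ]
        simp only [mul_add, add_mul, mul_smul_comm, smul_mul_assoc, mul_one]
        rw [mul_assoc α P C, mul_assoc β (P*C) C, hPCC]
        module
      rw [← mul_assoc, e1]
      simp only [mul_add, add_mul, mul_smul_comm, smul_mul_assoc, mul_one]
      rw [mul_assoc α P P, hP, mul_assoc σ (P*C) P, hPCP]
      module
    rw [expand, ← key]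
    simp only [map_add, _root_.map_mul, aeval_C, aeval_X, ← hα, ← hβ,
      Algebra.algebraMap_eq_smul_one]
    rw [hσ]
    simp only [mul_add, add_mul, smul_add, mul_smul_comm, smul_mul_assoc, smul_smul,
      mul_assoc, one_mul]
    module

lemma core_sandwich (hP : P * P = P) (hC : C * C = C) (Φ : ℕ → ℝ) (k : ℕ) :
    P * (Emat (Φ 0) P *
        ((List.range k).map (fun j => Emat (Φ (2*j+1)) C * Emat (Φ (2*j+2)) P)).prod) * P
      = P * aeval (P*C*P) ((qsvtAB Φ k).1 + Polynomial.X * (qsvtAB Φ k).2) * P := by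
  have hPA : P*C*P*P = P*C*P := by
    rw [show P*C*P*P = P*C*(P*P) by noncomm_ring, hP]
  have hAb : ∀ q : Polynomial ℂ,
      (P*C*P) * aeval (P*C*P) q = aeval (P*C*P) q * (P*C*P) := by
    intro q
    rw [show (P*C*P) * aeval (P*C*P) q
        = aeval (P*C*P) (Polynomial.X * q) by simp [aeval_X],
      show aeval (P*C*P) q * (P*C*P)
        = aeval (P*C*P) (q * Polynomial.X) by simp [aeval_X], mul_comm]
  rw [core P C hP hC Φ k, comm_aeval P C hP, map_add, _root_.map_mul, aeval_X]
  simp only [add_mul]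
  rw [mul_assoc (aeval (P*C*P) (qsvtAB Φ k).1) P P, hP]
  rw [mul_assoc (aeval (P*C*P) (qsvtAB Φ k).2) (P*C) P]
  rw [hAb ((qsvtAB Φ k).2)]
  rw [mul_assoc (aeval (P*C*P) (qsvtAB Φ k).2) (P*C*P) P, hPA]
  rw [mul_assoc (aeval (P*C*P) (qsvtAB Φ k).2) (P*C*P) P, hPA]

end Core

/- ### The 2×2 QSP model -/

noncomputable def P0 : Matrix (Fin 2) (Fin 2) ℂ := !![1, 0; 0, 0]

lemma P0_idem : P0 * P0 = P0 := by
  unfold P0; rw [Matrix.mul_fin_two]; norm_num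

lemma phase_eq_Emat (φ : ℝ) : phaseMat φ = Emat φ P0 := by
  unfold phaseMat Emat P0
  rw [Matrix.one_fin_two]
  ext i j
  fin_cases i <;> fin_cases j <;> simp

lemma Rmat_sq {x : ℝ} (hx : x ∈ Set.Icc (-1:ℝ) 1) : Rmat x * Rmat x = 1 := by
  have h1 : (0:ℝ) ≤ 1 - x^2 := by nlinarith [hx.1, hx.2]
  have hs : ((Real.sqrt (1 - x^2) : ℂ))^2 = ((1:ℂ) - (x:ℂ)^2) := by
    rw [← Complex.ofReal_pow, Real.sq_sqrt h1]; push_cast; ring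
  unfold Rmat
  rw [Matrix.mul_fin_two, Matrix.one_fin_two]
  have hss : ((Real.sqrt (1 - x^2) : ℝ) : ℂ) * ((Real.sqrt (1 - x^2) : ℝ) : ℂ)
      = 1 - (x:ℂ) * (x:ℂ) := by
    rw [show ((Real.sqrt (1 - x^2) : ℝ) : ℂ) * _ = ((Real.sqrt (1 - x^2) : ℂ))^2 by ring, hs]
    ring
  ext i j
  fin_cases i <;> fin_cases j <;> simp [hss] <;> ring_nf

lemma A2_eq {x : ℝ} : P0 * (Rmat x * P0 * Rmat x) * P0 = !![(x:ℂ)^2, 0; 0, 0] := by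
  unfold P0 Rmat
  ext i j
  fin_cases i <;> fin_cases j <;>
    simp [Matrix.mul_apply, Fin.sum_univ_two] <;> ring

lemma sandwich_entry (Z : Matrix (Fin 2) (Fin 2) ℂ) : (P0 * Z * P0) 0 0 = Z 0 0 := by
  simp [P0, Matrix.mul_apply, Fin.sum_univ_two, Matrix.vecMul, dotProduct,
    Matrix.vecHead, Matrix.vecTail]

lemma diag_matrix_eq (c : ℂ) : !![c, 0; 0, 0] = Matrix.diagonal ![c, 0] := by
  ext i j
  fin_cases i <;> fin_cases j <;> simp [Matrix.diagonal]

lemma qsp_eval (Φ : ℕ → ℝ) (m : ℕ) (x : ℝ) (hx : x ∈ Set.Icc (-1:ℝ) 1) :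
    (QSP (2*m) Φ x) 0 0
      = ((qsvtAB Φ m).1 + Polynomial.X * (qsvtAB Φ m).2).eval ((x:ℂ)^2) := by
  have hRR := Rmat_sq hx
  have hC : (Rmat x * P0 * Rmat x) * (Rmat x * P0 * Rmat x) = Rmat x * P0 * Rmat x := by
    rw [show (Rmat x * P0 * Rmat x) * (Rmat x * P0 * Rmat x)
        = Rmat x * (P0 * (Rmat x * Rmat x) * P0) * Rmat x by noncomm_ring, hRR, mul_one,
      P0_idem]
  have hQSP : QSP (2*m) Φ x = Emat (Φ 0) P0 *
      ((List.range m).map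
        (fun j => Emat (Φ (2*j+1)) (Rmat x * P0 * Rmat x) * Emat (Φ (2*j+2)) P0)).prod := by
    unfold QSP
    rw [list_prod_range_two_mul, phase_eq_Emat]
    congr 1
    apply congrArg
    apply List.map_congr_left
    intro j _
    rw [← Emat_conj (Rmat x) (Rmat x) P0 hRR, ← phase_eq_Emat, ← phase_eq_Emat]
    simp only [mul_assoc]
  have hcs := core_sandwich P0 (Rmat x * P0 * Rmat x) P0_idem hC Φ m
  have e1 : (QSP (2*m) Φ x) 0 0 = (P0 * QSP (2*m) Φ x * P0) 0 0 := (sandwich_entry _).symm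
  rw [e1, hQSP, hcs, A2_eq, sandwich_entry, diag_matrix_eq, aeval_diagonal]
  simp

/- ### The main theorem -/

/-- **QSVT, even case** (Theorem 2.9): for an even QSP-achievable polynomial
`p(X) = g(X²)`, the phased alternating sequence block-encodes
`Π_R g(Mᴴ M) Π_R` where `M = Π_L U Π_R`. -/
theorem qsvt_even (d r c : ℕ) (U : Matrix (Fin d) (Fin d) ℂ)
    (hU1 : Uᴴ * U = 1) (hU2 : U * Uᴴ = 1)
    (BL : Matrix (Fin d) (Fin r) ℂ) (BR : Matrix (Fin d) (Fin c) ℂ)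
    (hBL : BLᴴ * BL = 1) (hBR : BRᴴ * BR = 1)
    (n : ℕ) (hn : Even n) (hn2 : 2 ≤ n) (Φ : ℕ → ℝ)
    (p g : Polynomial ℂ) (hdeg : p.degree ≤ n)
    (hpg : p = g.comp (Polynomial.X ^ 2))
    (hqsp : ∀ x : ℝ, x ∈ Set.Icc (-1 : ℝ) 1 → (QSP n Φ x) 0 0 = p.eval (x : ℂ)) :
    (BR * BRᴴ) * phasedAltSeqEven U (BL * BLᴴ) (BR * BRᴴ) n Φ * (BR * BRᴴ) =
      (BR * BRᴴ) *
        Polynomial.aeval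
          (((BL * BLᴴ) * U * (BR * BRᴴ))ᴴ * ((BL * BLᴴ) * U * (BR * BRᴴ))) g *
        (BR * BRᴴ) := by
  have hn' : 2 * (n / 2) = n := Nat.two_mul_div_two_of_even hn
  have hPL : (BL * BLᴴ) * (BL * BLᴴ) = BL * BLᴴ := by
    calc (BL * BLᴴ) * (BL * BLᴴ) = BL * ((BLᴴ * BL) * BLᴴ) := by
          rw [Matrix.mul_assoc, Matrix.mul_assoc]
      _ = BL * BLᴴ := by rw [hBL, Matrix.one_mul]
  have hPR : (BR * BRᴴ) * (BR * BRᴴ) = BR * BRᴴ := by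
    calc (BR * BRᴴ) * (BR * BRᴴ) = BR * ((BRᴴ * BR) * BRᴴ) := by
          rw [Matrix.mul_assoc, Matrix.mul_assoc]
      _ = BR * BRᴴ := by rw [hBR, Matrix.one_mul]
  have hPLH : (BL * BLᴴ)ᴴ = BL * BLᴴ := by
    rw [conjTranspose_mul, conjTranspose_conjTranspose]
  have hPRH : (BR * BRᴴ)ᴴ = BR * BRᴴ := by
    rw [conjTranspose_mul, conjTranspose_conjTranspose]
  clear hBL hBR hdeg hn2 hn
  generalize hg1 : BL * BLᴴ = PL at hPL hPLH ⊢
  generalize hg2 : BR * BRᴴ = PR at hPR hPRH ⊢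
  have hCC : (Uᴴ * PL * U) * (Uᴴ * PL * U) = Uᴴ * PL * U := by
    rw [show (Uᴴ * PL * U) * (Uᴴ * PL * U) = Uᴴ * (PL * (U * Uᴴ) * PL) * U by noncomm_ring,
      hU2, mul_one, hPL]
  -- the polynomial extracted from the phases equals `g`
  have hhg : (qsvtAB Φ (n/2)).1 + Polynomial.X * (qsvtAB Φ (n/2)).2 = g := by
    set h := (qsvtAB Φ (n/2)).1 + Polynomial.X * (qsvtAB Φ (n/2)).2 with hh
    have heval : ∀ x : ℝ, x ∈ Set.Icc (-1:ℝ) 1 →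
        h.eval ((x:ℂ)^2) = g.eval ((x:ℂ)^2) := by
      intro x hx
      have h1 := qsp_eval Φ (n/2) x hx
      rw [hn'] at h1
      rw [← h1, hqsp x hx, hpg]
      simp [eval_comp]
    have hsub : h - g = 0 := by
      apply Polynomial.eq_zero_of_infinite_isRoot
      apply Set.Infinite.mono (s := (fun t : ℝ => ((t:ℂ))^2) '' Set.Icc 0 1)
      · intro z hz
        obtain ⟨t, ht, rfl⟩ := hz
        have ht' : t ∈ Set.Icc (-1:ℝ) 1 := ⟨by linarith [ht.1], ht.2⟩
        simp only [Set.mem_setOf_eq, IsRoot, eval_sub]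
        rw [heval t ht', sub_self]
      · apply Set.Infinite.image
        · intro a ha b hb hab
          have h3 : (a:ℂ)^2 = (b:ℂ)^2 := hab
          rw [← Complex.ofReal_pow, ← Complex.ofReal_pow] at h3
          have h2 : a^2 = b^2 := by exact_mod_cast h3
          exact (sq_eq_sq₀ ha.1 hb.1).mp h2
        · exact Set.Icc_infinite (by norm_num)
    exact sub_eq_zero.mp hsub
  have hM : ((PL * U * PR)ᴴ * (PL * U * PR)) = PR * (Uᴴ * PL * U) * PR := by
    rw [conjTranspose_mul, conjTranspose_mul, hPLH, hPRH]
    rw [show PR * (Uᴴ * PL) * (PL * U * PR) = PR * (Uᴴ * (PL * PL) * U) * PR by noncomm_ring,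
      hPL]
  have hseq : phasedAltSeqEven U PL PR n Φ = Emat (Φ 0) PR *
      ((List.range (n/2)).map
        (fun j => Emat (Φ (2*j+1)) (Uᴴ * PL * U) * Emat (Φ (2*j+2)) PR)).prod := by
    unfold phasedAltSeqEven
    congr 1
    apply congrArg
    apply List.map_congr_left
    intro j _
    rw [← Emat_conj Uᴴ U PL hU1]
  rw [hseq, core_sandwich PR (Uᴴ * PL * U) hPR hCC Φ (n/2), hhg, hM]
end
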